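/- arXiv:1612.08856 — 3 statements merged into one kernel-verified Lean document; each statement's English description precedes it below -/
import Mathlib

section
/- For r ≥ 3 and N ≥ n, the complete r-uniform (n-1)-partite hypergraph T_r(N, n-1) (parts differing in size by at most 1) contains no complete r-uniform Berge-hypergraph of order n. Consequently, ex(N, F_n^{(r)}) ≥ t_r(N, n-1), where t_r(N, n-1) is the number of edges of T_r(N, n-1). -/
open scoped Classical

-- singleton fiber helper
lemma fiber_single {V ι : Type*} [DecidableEq V] [DecidableEq ι]
    (P : V → ι) (e : Finset V) (h : ∀ p, (e.filter fun v => P v = p).card ≤ 1)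
    {x : V} (hx : x ∈ e) : e.filter (fun v => P v = P x) = {x} := by
  have hsub : {x} ⊆ e.filter (fun v => P v = P x) := by
    simp [Finset.singleton_subset_iff, hx]
  exact (Finset.eq_of_subset_of_card_le hsub (by simpa using h (P x))).symm

lemma min'_of_eq_singleton {V : Type*} [LinearOrder V] {s : Finset V} {x : V}
    (h : s = {x}) (hne : s.Nonempty) : s.min' hne = x := by
  subst h; exact Finset.min'_singleton x

lemma fiber_card {V ι : Type*} [Fintype V] [LinearOrder V] [Fintype ι] [DecidableEq ι]
    (P : V → ι) (S : Finset ι) (B : Finset (Finset V))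
    (hB : ∀ e : Finset V, e ∈ B ↔
      ((∀ p, (e.filter fun v => P v = p).card ≤ 1) ∧ e.image P = S)) :
    B.card = ∏ p ∈ S, (Finset.univ.filter fun v => P v = p).card := by
  rw [← Finset.card_pi]
  have hne : ∀ (e : Finset V), e ∈ B →
      ∀ p ∈ S, (e.filter fun v => P v = p).Nonempty := by
    intro e he p hp
    rw [hB] at he
    rw [← he.2] at hp
    obtain ⟨v, hv, hPv⟩ := Finset.mem_image.mp hp
    exact ⟨v, Finset.mem_filter.mpr ⟨hv, hPv⟩⟩
  refine Finset.card_bij' (fun e he => fun p hp => (e.filter fun v => P v = p).min' (hne e he p hp))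
    (fun f hf => S.attach.image fun p => f p.1 p.2) ?_ ?_ ?_ ?_
  · intro e he
    rw [Finset.mem_pi]
    intro p hp
    have := (e.filter fun v => P v = p).min'_mem (hne e he p hp)
    simp only [Finset.mem_filter] at this ⊢
    exact ⟨Finset.mem_univ _, this.2⟩
  · intro f hf
    rw [Finset.mem_pi] at hf
    have hmem : ∀ p (hp : p ∈ S), P (f p hp) = p := by
      intro p hp
      have := hf p hp
      simp only [Finset.mem_filter] at this
      exact this.2
    rw [hB]
    constructor
    · intro p
      rw [Finset.card_le_one]
      intro a ha b hb
      simp only [Finset.mem_filter, Finset.mem_image, Finset.mem_attach, true_and,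
        Subtype.exists] at ha hb
      obtain ⟨⟨q, hq, rfl⟩, hPa⟩ := ha
      obtain ⟨⟨q', hq', rfl⟩, hPb⟩ := hb
      have : q = q' := by rw [← hmem q hq, ← hmem q' hq', hPa, hPb]
      subst this; rfl
    · ext p
      simp only [Finset.mem_image, Finset.mem_attach, true_and, Subtype.exists]
      constructor
      · rintro ⟨v, ⟨q, hq, rfl⟩, rfl⟩
        rw [hmem q hq]; exact hq
      · intro hp
        exact ⟨f p hp, ⟨p, hp, rfl⟩, hmem p hp⟩
  · intro e he
    have he' := (hB e).mp he
    ext x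
    simp only [Finset.mem_image, Finset.mem_attach, true_and, Subtype.exists]
    constructor
    · rintro ⟨p, hp, rfl⟩
      have := (e.filter fun v => P v = p).min'_mem (hne e he p hp)
      exact (Finset.mem_filter.mp this).1
    · intro hx
      have hpx : P x ∈ S := by rw [← he'.2]; exact Finset.mem_image_of_mem _ hx
      exact ⟨P x, hpx, min'_of_eq_singleton (fiber_single P e he'.1 hx) _⟩
  · intro f hf
    rw [Finset.mem_pi] at hf
    have hmem : ∀ p (hp : p ∈ S), P (f p hp) = p := by
      intro p hp
      have := hf p hp
      simp only [Finset.mem_filter] at this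
      exact this.2
    funext p hp
    have hfin : ((S.attach.image fun q => f q.1 q.2).filter fun v => P v = p) = {f p hp} := by
      apply Finset.eq_singleton_iff_unique_mem.mpr
      constructor
      · simp only [Finset.mem_filter, Finset.mem_image, Finset.mem_attach, true_and,
          Subtype.exists]
        exact ⟨⟨p, hp, rfl⟩, hmem p hp⟩
      · intro b hb
        simp only [Finset.mem_filter, Finset.mem_image, Finset.mem_attach, true_and,
          Subtype.exists] at hb
        obtain ⟨⟨q, hq, rfl⟩, hPb⟩ := hb
        have : q = p := by rw [← hmem q hq, hPb]
        subst this; rfl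
    exact min'_of_eq_singleton hfin _

lemma card_supersets {ι : Type*} [DecidableEq ι] [Fintype ι] (t : Finset ι) (r : ℕ)
    (ht : t.card ≤ r) :
    ((Finset.powersetCard r (Finset.univ : Finset ι)).filter fun S => t ⊆ S).card
      = (Fintype.card ι - t.card).choose (r - t.card) := by
  have key : ((Finset.powersetCard r (Finset.univ : Finset ι)).filter fun S => t ⊆ S).card
      = (Finset.powersetCard (r - t.card) ((Finset.univ : Finset ι) \ t)).card := by
    refine Finset.card_bij' (fun S _ => S \ t) (fun u _ => u ∪ t) ?_ ?_ ?_ ?_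
    · intro S hS
      simp only [Finset.mem_filter, Finset.mem_powersetCard] at hS
      rw [Finset.mem_powersetCard]
      exact ⟨Finset.sdiff_subset_sdiff hS.1.1 le_rfl,
        by rw [Finset.card_sdiff_of_subset hS.2, hS.1.2]⟩
    · intro u hu
      rw [Finset.mem_powersetCard] at hu
      have hdisj : Disjoint u t := Finset.disjoint_of_subset_left hu.1 (Finset.sdiff_disjoint)
      simp only [Finset.mem_filter, Finset.mem_powersetCard]
      refine ⟨⟨Finset.subset_univ _, ?_⟩, Finset.subset_union_right⟩
      rw [Finset.card_union_of_disjoint hdisj, hu.2]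
      omega
    · intro S hS
      simp only [Finset.mem_filter] at hS
      exact Finset.sdiff_union_of_subset hS.2
    · intro u hu
      rw [Finset.mem_powersetCard] at hu
      have hdisj : Disjoint u t := Finset.disjoint_of_subset_left hu.1 (Finset.sdiff_disjoint)
      show (u ∪ t) \ t = u
      rw [Finset.union_sdiff_distrib, Finset.sdiff_self, Finset.union_empty,
        Finset.sdiff_eq_self_of_disjoint hdisj]
  rw [key, Finset.card_powersetCard, Finset.card_sdiff_of_subset (Finset.subset_univ t), Finset.card_univ]

lemma card_supersets_zero {ι : Type*} [DecidableEq ι] [Fintype ι] (t : Finset ι) (r : ℕ)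
    (ht : r < t.card) :
    ((Finset.powersetCard r (Finset.univ : Finset ι)).filter fun S => t ⊆ S).card = 0 := by
  rw [Finset.card_eq_zero, Finset.filter_eq_empty_iff]
  intro S hS hsub
  rw [Finset.mem_powersetCard] at hS
  have := Finset.card_le_card hsub
  omega

lemma card_filter_val_lt (m j : ℕ) (hj : j ≤ m) :
    ((Finset.univ : Finset (Fin m)).filter fun p : Fin m => (p : ℕ) < j).card = j := by
  have : ((Finset.univ : Finset (Fin m)).filter fun p : Fin m => (p : ℕ) < j)
      = Finset.map ⟨Fin.castLE hj, Fin.castLE_injective hj⟩ Finset.univ := by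
    ext p
    simp only [Finset.mem_filter, Finset.mem_univ, true_and, Finset.mem_map,
      Function.Embedding.coeFn_mk]
    constructor
    · intro hp
      exact ⟨⟨(p : ℕ), hp⟩, by ext; rfl⟩
    · rintro ⟨q, rfl⟩
      exact q.2
  rw [this, Finset.card_map, Finset.card_univ, Fintype.card_fin]
/-- `E` contains a complete `r`-uniform Berge-hypergraph of order `n`:
there are distinct core vertices `v 0, …, v (n-1)` and distinct edges `e i j`
(for `i < j`) with `v i, v j ∈ e i j`. -/
def HasBergeK {V : Type*} (n : ℕ) (E : Finset (Finset V)) : Prop :=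
  ∃ v : Fin n ↪ V, ∃ e : Fin n → Fin n → Finset V,
    (∀ i j : Fin n, i < j → e i j ∈ E ∧ v i ∈ e i j ∧ v j ∈ e i j) ∧
    (∀ i j i' j' : Fin n, i < j → i' < j' → e i j = e i' j' → i = i' ∧ j = j')

theorem stmt_4 (r n ℓ j N : ℕ) (hr : 3 ≤ r) (hn : r < n) (hNn : n ≤ N)
    (hℓ : 1 ≤ ℓ) (hj1 : 1 ≤ j) (hj : j ≤ n - 1) (hN : N = ℓ * (n - 1) + j)
    (P : Fin N → Fin (n - 1))
    (hP : ∀ p : Fin (n - 1),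
      (Finset.univ.filter fun v => P v = p).card = if (p : ℕ) < j then ℓ + 1 else ℓ) :
    ¬ HasBergeK n ((Finset.univ : Finset (Finset (Fin N))).filter fun e =>
        e.card = r ∧ ∀ p : Fin (n - 1), (e.filter fun v => P v = p).card ≤ 1) ∧
    ((Finset.univ : Finset (Finset (Fin N))).filter fun e =>
        e.card = r ∧ ∀ p : Fin (n - 1), (e.filter fun v => P v = p).card ≤ 1).card =
      ∑ i ∈ Finset.range (r + 1), ℓ ^ (r - i) * Nat.choose j i * Nat.choose (n - 1 - i) (r - i) := by
  set A := (Finset.univ : Finset (Finset (Fin N))).filter fun e =>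
      e.card = r ∧ ∀ p : Fin (n - 1), (e.filter fun v => P v = p).card ≤ 1 with hA
  constructor
  · -- no Berge K_n
    rintro ⟨v, e, h1, -⟩
    have key : ∀ a b : Fin n, a < b → P (v a) = P (v b) → False := by
      intro a b h heq
      obtain ⟨hmem, hva, hvb⟩ := h1 a b h
      have hprop := (Finset.mem_filter.mp hmem).2.2 (P (v a))
      have hsub : ({v a, v b} : Finset (Fin N)) ⊆ (e a b).filter fun w => P w = P (v a) := by
        intro x hx
        rcases Finset.mem_insert.mp hx with rfl | hx
        · exact Finset.mem_filter.mpr ⟨hva, rfl⟩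
        · rw [Finset.mem_singleton] at hx; subst hx
          exact Finset.mem_filter.mpr ⟨hvb, heq.symm⟩
      have h2 : ({v a, v b} : Finset (Fin N)).card = 2 :=
        Finset.card_pair (v.injective.ne h.ne)
      have := Finset.card_le_card hsub
      omega
    have hcard : Fintype.card (Fin (n - 1)) < Fintype.card (Fin n) := by
      simp only [Fintype.card_fin]; omega
    obtain ⟨a, b, hab, heq⟩ := Fintype.exists_ne_map_eq_of_card_lt (fun i => P (v i)) hcard
    rcases hab.lt_or_gt with h | h
    · exact key a b h heq
    · exact key b a h heq.symm
  · -- counting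
    have hinj : ∀ e : Finset (Fin N), (∀ p, (e.filter fun v => P v = p).card ≤ 1) →
        (e.image P).card = e.card := by
      intro e hfib
      apply Finset.card_image_of_injOn
      intro a ha b hb hab
      have hb' : b ∈ e.filter fun v => P v = P a := Finset.mem_filter.mpr ⟨hb, hab.symm⟩
      rw [fiber_single P e hfib ha, Finset.mem_singleton] at hb'
      exact hb'.symm
    have step1 : A.card = ∑ S ∈ Finset.powersetCard r (Finset.univ : Finset (Fin (n - 1))),
        (A.filter fun e => e.image P = S).card := by
      apply Finset.card_eq_sum_card_fiberwise
      intro e he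
      rw [Finset.mem_coe, Finset.mem_powersetCard]
      simp only [Finset.mem_coe, hA, Finset.mem_filter, Finset.mem_univ, true_and] at he
      exact ⟨Finset.subset_univ _, by rw [hinj e he.2, he.1]⟩
    have step2 : ∀ S ∈ Finset.powersetCard r (Finset.univ : Finset (Fin (n - 1))),
        (A.filter fun e => e.image P = S).card
          = ∏ p ∈ S, ((if (p : ℕ) < j then 1 else 0) + ℓ) := by
      intro S hS
      rw [Finset.mem_powersetCard] at hS
      have hB : ∀ e : Finset (Fin N), e ∈ A.filter (fun e => e.image P = S) ↔
          ((∀ p, (e.filter fun v => P v = p).card ≤ 1) ∧ e.image P = S) := by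
        intro e
        simp only [hA, Finset.mem_filter, Finset.mem_univ, true_and]
        constructor
        · rintro ⟨⟨-, hfib⟩, him⟩; exact ⟨hfib, him⟩
        · rintro ⟨hfib, him⟩
          exact ⟨⟨by rw [← hinj e hfib, him, hS.2], hfib⟩, him⟩
      rw [fiber_card P S _ hB]
      refine Finset.prod_congr rfl fun p _ => ?_
      rw [hP p]
      split_ifs <;> omega
    have step3 : ∀ S ∈ Finset.powersetCard r (Finset.univ : Finset (Fin (n - 1))),
        ∏ p ∈ S, ((if (p : ℕ) < j then 1 else 0) + ℓ)
          = ∑ t ∈ S.powerset, (∏ p ∈ t, if (p : ℕ) < j then 1 else 0) * ℓ ^ (S \ t).card := by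
      intro S _
      rw [Finset.prod_add]
      exact Finset.sum_congr rfl fun t _ => by rw [Finset.prod_const]
    set big := (Finset.univ : Finset (Fin (n - 1))).filter fun p : Fin (n - 1) => (p : ℕ) < j
      with hbigdef
    have hbig : big.card = j := card_filter_val_lt (n - 1) j hj
    have hind : ∀ t : Finset (Fin (n - 1)),
        (∏ p ∈ t, if (p : ℕ) < j then 1 else 0) = if t ⊆ big then 1 else 0 := by
      intro t
      split_ifs with h
      · refine Finset.prod_eq_one fun p hp => ?_
        have := h hp
        rw [hbigdef, Finset.mem_filter] at this
        rw [if_pos this.2]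
      · obtain ⟨p, hp, hnp⟩ := Finset.not_subset.mp h
        refine Finset.prod_eq_zero hp ?_
        rw [hbigdef, Finset.mem_filter] at hnp
        rw [if_neg fun hc => hnp ⟨Finset.mem_univ _, hc⟩]
    have step4 : ∑ S ∈ Finset.powersetCard r (Finset.univ : Finset (Fin (n - 1))),
          ∑ t ∈ S.powerset, (∏ p ∈ t, if (p : ℕ) < j then 1 else 0) * ℓ ^ (S \ t).card
        = ∑ t ∈ (Finset.univ : Finset (Fin (n - 1))).powerset,
            ∑ S ∈ (Finset.powersetCard r (Finset.univ : Finset (Fin (n - 1)))).filter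
              (fun S => t ⊆ S), (∏ p ∈ t, if (p : ℕ) < j then 1 else 0) * ℓ ^ (S \ t).card := by
      apply Finset.sum_comm'
      intro S t
      simp only [Finset.mem_powersetCard, Finset.mem_powerset, Finset.mem_filter]
      constructor
      · rintro ⟨⟨hSu, hSc⟩, htS⟩
        exact ⟨⟨⟨hSu, hSc⟩, htS⟩, htS.trans hSu⟩
      · rintro ⟨⟨hS, htS⟩, -⟩
        exact ⟨hS, htS⟩
    have step5 : ∀ t ∈ (Finset.univ : Finset (Fin (n - 1))).powerset,
        ∑ S ∈ (Finset.powersetCard r (Finset.univ : Finset (Fin (n - 1)))).filter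
            (fun S => t ⊆ S), (∏ p ∈ t, if (p : ℕ) < j then 1 else 0) * ℓ ^ (S \ t).card
          = ((if t ⊆ big then 1 else 0) * ℓ ^ (r - t.card))
              * ((Finset.powersetCard r (Finset.univ : Finset (Fin (n - 1)))).filter
                  (fun S => t ⊆ S)).card := by
      intro t _
      have hc : ∀ S ∈ (Finset.powersetCard r (Finset.univ : Finset (Fin (n - 1)))).filter
          (fun S => t ⊆ S),
          (∏ p ∈ t, if (p : ℕ) < j then 1 else 0) * ℓ ^ (S \ t).card
            = (if t ⊆ big then 1 else 0) * ℓ ^ (r - t.card) := by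
        intro S hS
        simp only [Finset.mem_filter, Finset.mem_powersetCard] at hS
        rw [Finset.card_sdiff_of_subset hS.2, hS.1.2, hind]
      rw [Finset.sum_congr rfl hc, Finset.sum_const, smul_eq_mul, mul_comm]
    have hpowbig : (Finset.univ : Finset (Fin (n - 1))).powerset.filter (fun t => t ⊆ big)
        = big.powerset := by
      ext t
      simp [Finset.mem_powerset, Finset.mem_filter, Finset.subset_univ]
    have step6 : ∑ t ∈ (Finset.univ : Finset (Fin (n - 1))).powerset,
          ((if t ⊆ big then 1 else 0) * ℓ ^ (r - t.card))
            * ((Finset.powersetCard r (Finset.univ : Finset (Fin (n - 1)))).filter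
                (fun S => t ⊆ S)).card
        = ∑ t ∈ big.powerset, ℓ ^ (r - t.card)
            * ((Finset.powersetCard r (Finset.univ : Finset (Fin (n - 1)))).filter
                (fun S => t ⊆ S)).card := by
      rw [← hpowbig, Finset.sum_filter]
      refine Finset.sum_congr rfl fun t _ => ?_
      split_ifs with h <;> simp
    have hNt : ∀ (t : Finset (Fin (n - 1))),
        ((Finset.powersetCard r (Finset.univ : Finset (Fin (n - 1)))).filter
            (fun S => t ⊆ S)).card
          = if t.card ≤ r then (n - 1 - t.card).choose (r - t.card) else 0 := by
      intro t
      split_ifs with h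
      · rw [card_supersets t r h, Fintype.card_fin]
      · exact card_supersets_zero t r (by omega)
    have step7 : ∑ t ∈ big.powerset, ℓ ^ (r - t.card)
          * ((Finset.powersetCard r (Finset.univ : Finset (Fin (n - 1)))).filter
              (fun S => t ⊆ S)).card
        = ∑ i ∈ Finset.range (j + 1),
            j.choose i * (ℓ ^ (r - i) * if i ≤ r then (n - 1 - i).choose (r - i) else 0) := by
      rw [Finset.sum_powerset, hbig]
      refine Finset.sum_congr rfl fun i _ => ?_
      have hc : ∀ t ∈ Finset.powersetCard i big,
          ℓ ^ (r - t.card)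
            * ((Finset.powersetCard r (Finset.univ : Finset (Fin (n - 1)))).filter
                (fun S => t ⊆ S)).card
          = ℓ ^ (r - i) * if i ≤ r then (n - 1 - i).choose (r - i) else 0 := by
        intro t ht
        rw [Finset.mem_powersetCard] at ht
        rw [hNt, ht.2]
      rw [Finset.sum_congr rfl hc, Finset.sum_const, smul_eq_mul,
        Finset.card_powersetCard, hbig]
    -- reconcile ranges
    set g : ℕ → ℕ := fun i =>
      ℓ ^ (r - i) * j.choose i * (if i ≤ r then (n - 1 - i).choose (r - i) else 0) with hg
    have e1 : ∑ i ∈ Finset.range (j + 1),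
          j.choose i * (ℓ ^ (r - i) * if i ≤ r then (n - 1 - i).choose (r - i) else 0)
        = ∑ i ∈ Finset.range (j + 1), g i := by
      refine Finset.sum_congr rfl fun i _ => ?_
      rw [hg]; ring
    have e2 : ∑ i ∈ Finset.range (j + 1), g i = ∑ i ∈ Finset.range (j + r + 1), g i := by
      refine Finset.sum_subset (Finset.range_subset_range.mpr (by omega)) fun i _ hi => ?_
      rw [Finset.mem_range, not_lt] at hi
      rw [hg]
      simp only []
      rw [Nat.choose_eq_zero_of_lt (by omega), mul_zero, zero_mul]
    have e3 : ∑ i ∈ Finset.range (r + 1),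
          ℓ ^ (r - i) * Nat.choose j i * Nat.choose (n - 1 - i) (r - i)
        = ∑ i ∈ Finset.range (r + 1), g i := by
      refine Finset.sum_congr rfl fun i hi => ?_
      rw [Finset.mem_range] at hi
      rw [hg]
      simp only []
      rw [if_pos (by omega)]
    have e4 : ∑ i ∈ Finset.range (r + 1), g i = ∑ i ∈ Finset.range (j + r + 1), g i := by
      refine Finset.sum_subset (Finset.range_subset_range.mpr (by omega)) fun i _ hi => ?_
      rw [Finset.mem_range, not_lt] at hi
      rw [hg]
      simp only []
      rw [if_neg (by omega), mul_zero]
    calc A.card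
        = ∑ S ∈ Finset.powersetCard r (Finset.univ : Finset (Fin (n - 1))),
            (A.filter fun e => e.image P = S).card := step1
      _ = ∑ S ∈ Finset.powersetCard r (Finset.univ : Finset (Fin (n - 1))),
            ∏ p ∈ S, ((if (p : ℕ) < j then 1 else 0) + ℓ) := Finset.sum_congr rfl step2
      _ = ∑ S ∈ Finset.powersetCard r (Finset.univ : Finset (Fin (n - 1))),
            ∑ t ∈ S.powerset,
              (∏ p ∈ t, if (p : ℕ) < j then 1 else 0) * ℓ ^ (S \ t).card :=
          Finset.sum_congr rfl step3
      _ = ∑ t ∈ (Finset.univ : Finset (Fin (n - 1))).powerset,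
            ∑ S ∈ (Finset.powersetCard r (Finset.univ : Finset (Fin (n - 1)))).filter
              (fun S => t ⊆ S), (∏ p ∈ t, if (p : ℕ) < j then 1 else 0) * ℓ ^ (S \ t).card :=
          step4
      _ = ∑ t ∈ (Finset.univ : Finset (Fin (n - 1))).powerset,
            ((if t ⊆ big then 1 else 0) * ℓ ^ (r - t.card))
              * ((Finset.powersetCard r (Finset.univ : Finset (Fin (n - 1)))).filter
                  (fun S => t ⊆ S)).card := Finset.sum_congr rfl step5
      _ = ∑ t ∈ big.powerset, ℓ ^ (r - t.card)
              * ((Finset.powersetCard r (Finset.univ : Finset (Fin (n - 1)))).filter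
                  (fun S => t ⊆ S)).card := step6
      _ = ∑ i ∈ Finset.range (j + 1),
            j.choose i * (ℓ ^ (r - i) * if i ≤ r then (n - 1 - i).choose (r - i) else 0) :=
          step7
      _ = ∑ i ∈ Finset.range (j + 1), g i := e1
      _ = ∑ i ∈ Finset.range (j + r + 1), g i := e2
      _ = ∑ i ∈ Finset.range (r + 1), g i := e4.symm
      _ = ∑ i ∈ Finset.range (r + 1),
            ℓ ^ (r - i) * Nat.choose j i * Nat.choose (n - 1 - i) (r - i) := e3.symm
end

section
/- For integers n ≥ 13, ℓ ≥ 2, 1 ≤ j ≤ n-1, and N = ℓ(n-1) + j, N' = (ℓ-1)(n-1) + j, the following inequality holds: C(n-1,3) + N'·C(n-2,2) + t_3(N', n-1) + t_2(N', n-1) ≤ t_3(N, n-1), where t_2(N', n-1) = (ℓ-1)^2 C(n-1,2) + j(ℓ-1)(n-2) + C(j,2) and t_3 is as defined. -/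
theorem stmt_12 (n ℓ j N N' : ℕ) (hn : 13 ≤ n) (hℓ : 2 ≤ ℓ)
    (hj1 : 1 ≤ j) (hj : j ≤ n - 1)
    (hN : N = ℓ * (n - 1) + j) (hN' : N' = (ℓ - 1) * (n - 1) + j) :
    Nat.choose (n - 1) 3 + N' * Nat.choose (n - 2) 2 +
        (∑ i ∈ Finset.range 4,
          (ℓ - 1) ^ (3 - i) * Nat.choose j i * Nat.choose (n - 1 - i) (3 - i)) +
        ((ℓ - 1) ^ 2 * Nat.choose (n - 1) 2 + j * (ℓ - 1) * (n - 2) + Nat.choose j 2) ≤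
      ∑ i ∈ Finset.range 4, ℓ ^ (3 - i) * Nat.choose j i * Nat.choose (n - 1 - i) (3 - i) := by
  subst hN hN'
  obtain ⟨m, rfl⟩ : ∃ m, n = m + 13 := ⟨n - 13, by omega⟩
  obtain ⟨a, rfl⟩ : ∃ a, ℓ = a + 2 := ⟨ℓ - 2, by omega⟩
  simp only [Finset.sum_range_succ, Finset.sum_range_zero,
    show m + 13 - 1 = m + 12 from rfl, show m + 13 - 2 = m + 11 from rfl,
    show m + 12 - 1 = m + 11 from rfl, show m + 12 - 2 = m + 10 from rfl,
    show m + 12 - 3 = m + 9 from rfl, show a + 2 - 1 = a + 1 from rfl, Nat.sub_zero,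
    show 3 - 0 = 3 from rfl, show 3 - 1 = 2 from rfl, show 3 - 2 = 1 from rfl,
    show 3 - 3 = 0 from rfl, pow_zero, pow_one, Nat.choose_zero_right,
    Nat.choose_one_right, Nat.choose_self, one_mul, mul_one, zero_add]
  set A := Nat.choose (m + 12) 3 with hA
  set B := Nat.choose (m + 12) 2 with hB
  set D := Nat.choose (m + 11) 2 with hD
  set E := Nat.choose j 2 with hE
  set F := Nat.choose j 3 with hF
  have h1 : (m + 12) * D = A * 3 := by
    have := Nat.add_one_mul_choose_eq (m + 11) 2
    simpa using this
  have h2 : D * 2 = (m + 11) * (m + 10) := by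
    have := Nat.add_one_mul_choose_eq (m + 10) 1
    simp only [Nat.succ_eq_add_one, Nat.choose_one_right,
      show m + 10 + 1 = m + 11 from rfl, show (1 : ℕ) + 1 = 2 from rfl] at this
    omega
  have hBA : B ≤ A := by
    have := Nat.choose_le_succ_of_lt_half_left (r := 2) (n := m + 12) (by omega)
    simpa using this
  have k1 : (a + 1) ^ 2 * B ≤ (a + 1) ^ 2 * A := Nat.mul_le_mul_left _ hBA
  have hm : m + 11 ≤ D * 2 := by nlinarith
  have k2 : j * (a + 1) * (m + 11) ≤ j * (a + 1) * (D * 2) :=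
    Nat.mul_le_mul_left _ hm
  have k3 : E ≤ E * (m + 10) := Nat.le_mul_of_pos_right _ (by omega)
  have k4 : (a + 1) * ((m + 12) * D) = (a + 1) * (A * 3) := by rw [h1]
  nlinarith [k1, k2, k3, k4]
end

section
/- For n ≥ 13, ℓ ≥ 2, and 1 ≤ j ≤ n-1: 3ℓ·C(n-1,3) + (ℓ-1)^2·C(n-1,2) + (ℓ-1)(n-1)·C(n-2,2) ≤ 3ℓ^2·C(n-1,3). -/
lemma c2 (b : ℕ) : 2 * Nat.choose (b + 2) 2 = (b + 1) * (b + 2) := by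
  induction b with
  | zero => decide
  | succ b ih =>
    have : Nat.choose (b + 3) 2 = Nat.choose (b + 2) 1 + Nat.choose (b + 2) 2 :=
      Nat.choose_succ_succ (b + 2) 1
    simp [this, Nat.choose_one_right] at *
    ring_nf at *
    omega

lemma c3 (b : ℕ) : 6 * Nat.choose (b + 3) 3 = (b + 1) * (b + 2) * (b + 3) := by
  induction b with
  | zero => decide
  | succ b ih =>
    have h : Nat.choose (b + 4) 3 = Nat.choose (b + 3) 2 + Nat.choose (b + 3) 3 :=
      Nat.choose_succ_succ (b + 3) 2
    have h2 := c2 (b + 1)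
    rw [h]
    have : (b + 1 + 2) = b + 3 := by ring
    rw [this] at h2
    nlinarith [ih, h2]

theorem stmt_13 (n ℓ j : ℕ) (hn : 13 ≤ n) (hℓ : 2 ≤ ℓ) (hj1 : 1 ≤ j) (hj : j ≤ n - 1) :
    3 * ℓ * Nat.choose (n - 1) 3 + (ℓ - 1) ^ 2 * Nat.choose (n - 1) 2 +
        (ℓ - 1) * (n - 1) * Nat.choose (n - 2) 2 ≤
      3 * ℓ ^ 2 * Nat.choose (n - 1) 3 := by
  obtain ⟨a, rfl⟩ : ∃ a, n = a + 13 := ⟨n - 13, by omega⟩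
  obtain ⟨c, rfl⟩ : ∃ c, ℓ = c + 2 := ⟨ℓ - 2, by omega⟩
  have e3 : 6 * Nat.choose (a + 12) 3 = (a + 10) * (a + 11) * (a + 12) := by
    simpa using c3 (a + 9)
  have e2 : 2 * Nat.choose (a + 12) 2 = (a + 11) * (a + 12) := by
    simpa using c2 (a + 10)
  have e2' : 2 * Nat.choose (a + 11) 2 = (a + 10) * (a + 11) := by
    simpa using c2 (a + 9)
  have h1 : a + 13 - 1 = a + 12 := by omega
  have h3 : a + 13 - 2 = a + 11 := by omega
  have hc : c + 2 - 1 = c + 1 := by omega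
  rw [h1, h3, hc]
  have base : (c + 1) + (a + 10) ≤ (c + 2) * (a + 10) := by nlinarith
  have step := Nat.mul_le_mul_left ((a + 11) * (a + 12) * (c + 1)) base
  refine Nat.le_of_mul_le_mul_left ?_ (by norm_num : 0 < 6)
  nlinarith [e3, e2, e2', step]
end
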